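/- Let R be a commutative semiring and S a multiplicative subset of R. If A is an S-primary ideal of R, then the S-radical √[S]A = {a ∈ R : s·aⁿ ∈ A for some s ∈ S and some n ≥ 1} is a prime ideal of R. -/
import Mathlib


/-- The S-radical of every S-primary ideal of a commutative semiring is a prime
ideal. -/
theorem sRadical_of_sPrimary_isPrime {R : Type*} [CommSemiring R]
    (S : Set R) (hS1 : (1 : R) ∈ S) (hSmul : ∀ s ∈ S, ∀ t ∈ S, s * t ∈ S)
    (A : Ideal R) (hAS : Disjoint S (A : Set R))
    (hAprim : ∃ s ∈ S, ∀ a b : R, a * b ∈ A → s * a ∈ A ∨ s * b ∈ A.radical) :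
    ∃ Q : Ideal R,
      (Q : Set R) = {a : R | ∃ s ∈ S, ∃ n : ℕ, 1 ≤ n ∧ s * a ^ n ∈ A} ∧
      Q.IsPrime := by
  obtain ⟨s₀, hs₀S, hprim⟩ := hAprim
  have hA1 : (1 : R) ∉ A := fun h => Set.disjoint_left.mp hAS hS1 h
  have hpow : ∀ s ∈ S, ∀ k : ℕ, s ^ (k + 1) ∈ S := by
    intro s hs k
    induction k with
    | zero => simpa using hs
    | succ k ih => rw [pow_succ]; exact hSmul _ ih _ hs
  have key : ∀ a : R, (∃ s ∈ S, ∃ n : ℕ, 1 ≤ n ∧ s * a ^ n ∈ A) ↔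
      ∃ s ∈ S, s * a ∈ A.radical := by
    intro a
    constructor
    · rintro ⟨s, hs, n, hn, hmem⟩
      obtain ⟨m, rfl⟩ : ∃ m, n = m + 1 := ⟨n - 1, by omega⟩
      refine ⟨s, hs, m + 1, ?_⟩
      have h : (s * a) ^ (m + 1) = s ^ m * (s * a ^ (m + 1)) := by ring
      rw [h]
      exact Ideal.mul_mem_left _ _ hmem
    · rintro ⟨s, hs, k, hk⟩
      rcases k with _ | m
      · exact absurd (by simpa using hk) hA1
      · refine ⟨s ^ (m + 1), hpow s hs m, m + 1, by omega, ?_⟩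
        rwa [mul_pow] at hk
  refine ⟨{ carrier := {a : R | ∃ s ∈ S, ∃ n : ℕ, 1 ≤ n ∧ s * a ^ n ∈ A},
            zero_mem' := ⟨1, hS1, 1, le_refl _, by simp⟩,
            add_mem' := ?_, smul_mem' := ?_ }, rfl, ?_⟩
  · rintro a b ha hb
    rw [Set.mem_setOf_eq, key] at ha hb ⊢
    obtain ⟨s, hs, hsa⟩ := ha
    obtain ⟨t, ht, htb⟩ := hb
    refine ⟨s * t, hSmul s hs t ht, ?_⟩
    have : s * t * (a + b) = t * (s * a) + s * (t * b) := by ring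
    rw [this]
    exact Ideal.add_mem _ (Ideal.mul_mem_left _ _ hsa) (Ideal.mul_mem_left _ _ htb)
  · rintro c a ha
    rw [Set.mem_setOf_eq, key] at ha ⊢
    obtain ⟨s, hs, hsa⟩ := ha
    refine ⟨s, hs, ?_⟩
    have : s * (c • a) = c * (s * a) := by simp [smul_eq_mul]; ring
    rw [this]
    exact Ideal.mul_mem_left _ _ hsa
  · constructor
    · intro htop
      have h1 := htop.ge (Submodule.mem_top (x := (1 : R)))
      obtain ⟨s, hs, n, hn, hmem⟩ := h1
      rw [one_pow, mul_one] at hmem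
      exact Set.disjoint_left.mp hAS hs hmem
    · intro a b hab
      obtain ⟨s, hs, hsab⟩ := (key (a * b)).mp hab
      obtain ⟨k, hk⟩ := hsab
      rcases k with _ | m
      · exact absurd (by simpa using hk) hA1
      · have hk' : s ^ (m + 1) * a ^ (m + 1) * b ^ (m + 1) ∈ A := by
          rw [mul_assoc, ← mul_pow, ← mul_pow]
          exact hk
        rcases hprim _ _ hk' with h | h
        · left
          exact ⟨s₀ * s ^ (m + 1), hSmul _ hs₀S _ (hpow s hs m), m + 1, by omega,
            by rwa [mul_assoc]⟩
        · right
          obtain ⟨j, hj⟩ := h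
          rcases j with _ | i
          · exact absurd (by simpa using hj) hA1
          · refine ⟨s₀ ^ (i + 1), hpow s₀ hs₀S i, (m + 1) * (i + 1), Nat.mul_pos (Nat.succ_pos m) (Nat.succ_pos i), ?_⟩
            rw [mul_pow] at hj
            rwa [← pow_mul] at hj
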